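/- With $f, g, h, \varepsilon, N$ as in the multiprogression construction, fix integers $m \in \mathbb{Z}$ and $n \in \{0,\dots,N-1\}$ and let $\mathcal{E}(m,n)$ be the set of $(x,y) \in \mathbb{R}^2$ satisfying $|y - n\varepsilon^{1/2}| < \tfrac12\varepsilon^{1/2}$, $|x - (m-n)\varepsilon^{1/2}| < \tfrac12\varepsilon^{1/2}$, and $|x + y - (m\varepsilon^{1/2} + n\varepsilon)| < \tfrac12\varepsilon$. Then for every $(x,y) \in \mathcal{E}(m,n)$ one has $g(y) - h(x+y) = 0$ and $|y - f(x) - h(x+y)| < \tfrac12\varepsilon$. -/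

import Mathlib

/-- `f(x) = k√ε − x` where `k` is the nearest integer to `x/√ε`. -/
noncomputable def fCon (ε x : ℝ) : ℝ := (round (x / Real.sqrt ε) : ℤ) * Real.sqrt ε - x

/-- `g(y) = k√ε + kε` where `k` is the nearest integer to `y/√ε`. -/
noncomputable def gCon (ε y : ℝ) : ℝ :=
  ((round (y / Real.sqrt ε) : ℤ) : ℝ) * Real.sqrt ε +
    ((round (y / Real.sqrt ε) : ℤ) : ℝ) * ε

/-- `h(t) = n√ε + nε` where `n ∈ {0,…,N−1}` is the residue mod `N` of the
nearest integer to `t/ε`. -/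
noncomputable def hCon (ε : ℝ) (N : ℕ) (t : ℝ) : ℝ :=
  ((round (t / ε) % (N : ℤ) : ℤ) : ℝ) * Real.sqrt ε +
    ((round (t / ε) % (N : ℤ) : ℤ) : ℝ) * ε

lemma round_eq_of_abs_lt {r : ℝ} {k : ℤ} (h : |r - k| < 1/2) : round r = k := by
  rw [round_eq, Int.floor_eq_iff]
  rw [abs_lt] at h
  constructor <;> push_cast <;> linarith

theorem stmt15 (ε : ℝ) (N : ℕ) (hε : 0 < ε) (hε1 : ε < 1) (hN : 0 < N)
    (hNε : (N : ℝ) = (Real.sqrt ε)⁻¹)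
    (m n : ℤ) (hn0 : 0 ≤ n) (hnN : n < (N : ℤ)) (x y : ℝ)
    (h₁ : |y - (n : ℝ) * Real.sqrt ε| < Real.sqrt ε / 2)
    (h₂ : |x - ((m : ℝ) - (n : ℝ)) * Real.sqrt ε| < Real.sqrt ε / 2)
    (h₃ : |x + y - ((m : ℝ) * Real.sqrt ε + (n : ℝ) * ε)| < ε / 2) :
    gCon ε y - hCon ε N (x + y) = 0 ∧
      |y - fCon ε x - hCon ε N (x + y)| < ε / 2 := by
  set s := Real.sqrt ε with hs
  have hspos : 0 < s := Real.sqrt_pos.2 hε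
  have hss : s * s = ε := Real.mul_self_sqrt hε.le
  have hry : round (y / s) = n := by
    apply round_eq_of_abs_lt
    have : y / s - n = (y - n * s) / s := by field_simp
    rw [this, abs_div, abs_of_pos hspos, div_lt_iff₀ hspos]
    calc |y - (n:ℝ) * s| < s / 2 := h₁
      _ = 1/2 * s := by ring
  have hrx : round (x / s) = m - n := by
    apply round_eq_of_abs_lt
    have : x / s - (↑(m - n) : ℝ) = (x - ((m:ℝ) - n) * s) / s := by push_cast; field_simp
    rw [this, abs_div, abs_of_pos hspos, div_lt_iff₀ hspos]
    calc |x - ((m:ℝ) - n) * s| < s / 2 := h₂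
      _ = 1/2 * s := by ring
  have hNs : (N : ℝ) * s = 1 := by rw [hNε]; field_simp
  have hrt : round ((x + y) / ε) = n + (N : ℤ) * m := by
    apply round_eq_of_abs_lt
    have he : ((n + (N:ℤ) * m : ℤ) : ℝ) * ε = (m:ℝ) * s + n * ε := by
      push_cast
      rw [← hss]
      linear_combination (m * s) * hNs
    have : (x + y) / ε - ((n + (N:ℤ) * m : ℤ) : ℝ)
        = (x + y - ((m:ℝ) * s + n * ε)) / ε := by
      rw [← he]; field_simp
    rw [this, abs_div, abs_of_pos hε, div_lt_iff₀ hε]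
    calc |x + y - ((m:ℝ) * s + n * ε)| < ε / 2 := h₃
      _ = 1/2 * ε := by ring
  have hmod : (n + (N : ℤ) * m) % (N : ℤ) = n := by
    rw [Int.add_mul_emod_self_left, Int.emod_eq_of_lt hn0 hnN]
  constructor
  · simp [gCon, hCon, ← hs, hry, hrt, hmod]
  · have : y - fCon ε x - hCon ε N (x + y)
        = x + y - ((m:ℝ) * s + n * ε) := by
      simp only [fCon, hCon, hrx, hrt, hmod, ← hs]
      push_cast
      ring
    rw [this]; exact h₃
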